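/- arXiv:1303.5136 — 2 statements merged into one kernel-verified Lean document; each statement's English description precedes it below -/
import Mathlib

section
/- Let k ≥ 4 and let G be a graph with maximum degree at most k containing a path x u v w y where u, v, w have degree 2 in G and x has degree at most k−1. If the square of G − u − v is (k+1)-choosable, then the square of G is (k+1)-choosable. -/
open SimpleGraph

/-- The square of a graph: vertices adjacent iff at distance at most 2. -/
def SimpleGraph.square {V : Type*} (G : SimpleGraph V) : SimpleGraph V where
  Adj u v := u ≠ v ∧ (G.Adj u v ∨ ∃ w, G.Adj u w ∧ G.Adj w v)
  symm := by
    constructor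
    rintro u v ⟨h, h2 | ⟨w, hw1, hw2⟩⟩
    · exact ⟨h.symm, Or.inl h2.symm⟩
    · exact ⟨h.symm, Or.inr ⟨w, hw2.symm, hw1.symm⟩⟩
  loopless := ⟨fun v h => h.1 rfl⟩

/-- A graph is `k`-choosable if from every assignment of lists of size at least `k`
there is a proper coloring. -/
def SimpleGraph.Choosable {V : Type*} (G : SimpleGraph V) (k : ℕ) : Prop :=
  ∀ L : V → Finset ℕ, (∀ v, k ≤ (L v).card) →
    ∃ c : V → ℕ, (∀ v, c v ∈ L v) ∧ ∀ ⦃u v⦄, G.Adj u v → c u ≠ c v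

/-- `G.MadLT x` means the maximum average degree of `G` is less than `x`:
every nonempty subgraph `H` satisfies `2|E(H)|/|V(H)| < x`. -/
def SimpleGraph.MadLT {V : Type*} (G : SimpleGraph V) (x : ℝ) : Prop :=
  ∀ H : G.Subgraph, H.verts.Nonempty →
    2 * (H.edgeSet.ncard : ℝ) / (H.verts.ncard : ℝ) < x

/-- (C2): a 3-thread with an endpoint of degree at most `k-1` is `(k+1)`-reducible. -/
theorem threeThread_reducible {V : Type*} [Fintype V] (k : ℕ) (hk : 4 ≤ k)
    (G : SimpleGraph V) (hΔ : ∀ z, (G.neighborSet z).ncard ≤ k)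
    (x u v w y : V) (hnodup : ([x, u, v, w, y] : List V).Nodup)
    (hxu : G.Adj x u) (huv : G.Adj u v) (hvw : G.Adj v w) (hwy : G.Adj w y)
    (hu : (G.neighborSet u).ncard = 2) (hv : (G.neighborSet v).ncard = 2)
    (hw : (G.neighborSet w).ncard = 2)
    (hx : (G.neighborSet x).ncard ≤ k - 1)
    (hred : ((G.induce {z | z ≠ u ∧ z ≠ v}).square.Choosable (k + 1))) :
    G.square.Choosable (k + 1) := by

  classical
  simp only [List.nodup_cons, List.mem_cons, List.mem_singleton, List.not_mem_nil,
    List.nodup_nil, and_true, not_or, or_false] at hnodup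
  obtain ⟨⟨hxu', hxv, hxw, hxy⟩, ⟨huv', huw, huy⟩, ⟨hvw', hvy⟩, hwy', -⟩ := hnodup
  -- neighbor set identifications
  have hNu : G.neighborSet u = {x, v} := by
    symm
    apply Set.eq_of_subset_of_ncard_le
    · rintro z (rfl | rfl)
      · exact hxu.symm
      · exact huv
    · rw [hu, Set.ncard_pair hxv]
    · exact Set.toFinite _
  have hNv : G.neighborSet v = {u, w} := by
    symm
    apply Set.eq_of_subset_of_ncard_le
    · rintro z (rfl | rfl)
      · exact huv.symm
      · exact hvw
    · rw [hv, Set.ncard_pair huw]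
    · exact Set.toFinite _
  have hNw : G.neighborSet w = {v, y} := by
    symm
    apply Set.eq_of_subset_of_ncard_le
    · rintro z (rfl | rfl)
      · exact hvw.symm
      · exact hwy
    · rw [hw, Set.ncard_pair hvy]
    · exact Set.toFinite _
  have memNu : ∀ z, G.Adj u z → z = x ∨ z = v := by
    intro z hz
    have h : z ∈ G.neighborSet u := hz
    rw [hNu] at h
    simpa using h
  have memNv : ∀ z, G.Adj v z → z = u ∨ z = w := by
    intro z hz
    have h : z ∈ G.neighborSet v := hz
    rw [hNv] at h
    simpa using h
  have memNw : ∀ z, G.Adj w z → z = v ∨ z = y := by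
    intro z hz
    have h : z ∈ G.neighborSet w := hz
    rw [hNw] at h
    simpa using h
  -- facts about square neighborhoods of u and v
  have factU : ∀ z, G.square.Adj u z →
      z = v ∨ z = x ∨ z = w ∨ (G.Adj x z ∧ z ≠ u) := by
    rintro z ⟨hne, hadj | ⟨t, ht1, ht2⟩⟩
    · rcases memNu z hadj with rfl | rfl
      · exact Or.inr (Or.inl rfl)
      · exact Or.inl rfl
    · rcases memNu t ht1 with rfl | rfl
      · exact Or.inr (Or.inr (Or.inr ⟨ht2, Ne.symm hne⟩))
      · rcases memNv z ht2 with rfl | rfl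
        · exact absurd rfl hne
        · exact Or.inr (Or.inr (Or.inl rfl))
  have factV : ∀ z, G.square.Adj v z → z = u ∨ z = x ∨ z = w ∨ z = y := by
    rintro z ⟨hne, hadj | ⟨t, ht1, ht2⟩⟩
    · rcases memNv z hadj with rfl | rfl
      · exact Or.inl rfl
      · exact Or.inr (Or.inr (Or.inl rfl))
    · rcases memNv t ht1 with rfl | rfl
      · rcases memNu z ht2 with rfl | rfl
        · exact Or.inr (Or.inl rfl)
        · exact absurd rfl hne
      · rcases memNw z ht2 with rfl | rfl
        · exact absurd rfl hne
        · exact Or.inr (Or.inr (Or.inr rfl))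
  intro L hL
  obtain ⟨c', hc'mem, hc'prop⟩ := hred (fun z => L z.val) (fun z => hL z.val)
  set c0 : V → ℕ := fun z => if h : z ≠ u ∧ z ≠ v then c' ⟨z, h⟩ else 0 with hc0def
  have hc0 : ∀ z (h : z ≠ u ∧ z ≠ v), c0 z = c' ⟨z, h⟩ := fun z h => dif_pos h
  -- bound on the neighborhood of x as a finset
  have hNxcard : (G.neighborFinset x).card ≤ k - 1 := by
    have : (G.neighborSet x).ncard = (G.neighborFinset x).card := by
      rw [neighborFinset_def, Set.ncard_eq_toFinset_card']
    omega
  have huNx : u ∈ G.neighborFinset x := (G.mem_neighborFinset x u).mpr hxu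
  -- choose a color for u
  set Fu : Finset ℕ :=
    insert (c0 x) (insert (c0 w) (((G.neighborFinset x).erase u).image c0)) with hFudef
  have hFucard : Fu.card ≤ k := by
    rw [hFudef]
    have h2 := Finset.card_image_le (s := (G.neighborFinset x).erase u) (f := c0)
    have h3 := Finset.card_erase_of_mem huNx
    have h4 := Finset.card_insert_le (c0 x) (insert (c0 w) (((G.neighborFinset x).erase u).image c0))
    have h5 := Finset.card_insert_le (c0 w) (((G.neighborFinset x).erase u).image c0)
    omega
  have hane : (L u \ Fu).Nonempty := by
    rw [← Finset.card_pos]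
    have := Finset.le_card_sdiff Fu (L u)
    have := hL u
    omega
  obtain ⟨a, haa⟩ := hane
  rw [Finset.mem_sdiff] at haa
  obtain ⟨haL, haF⟩ := haa
  have hax : a ≠ c0 x := fun h => haF (by rw [h]; exact Finset.mem_insert_self _ _)
  have haw : a ≠ c0 w :=
    fun h => haF (Finset.mem_insert_of_mem (by rw [h]; exact Finset.mem_insert_self _ _))
  have haN : ∀ z, G.Adj x z → z ≠ u → a ≠ c0 z := by
    intro z hz hzu h
    refine haF (Finset.mem_insert_of_mem (Finset.mem_insert_of_mem ?_))
    rw [h]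
    exact Finset.mem_image_of_mem c0
      (Finset.mem_erase.mpr ⟨hzu, (G.mem_neighborFinset x z).mpr hz⟩)
  -- choose a color for v
  set Fv : Finset ℕ := insert a (insert (c0 x) (insert (c0 w) {c0 y})) with hFvdef
  have hFvcard : Fv.card ≤ 4 := by
    rw [hFvdef]
    have h1 := Finset.card_insert_le a (insert (c0 x) (insert (c0 w) ({c0 y} : Finset ℕ)))
    have h2 := Finset.card_insert_le (c0 x) (insert (c0 w) ({c0 y} : Finset ℕ))
    have h3 := Finset.card_insert_le (c0 w) ({c0 y} : Finset ℕ)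
    have h4 : ({c0 y} : Finset ℕ).card = 1 := Finset.card_singleton _
    omega
  have hbne : (L v \ Fv).Nonempty := by
    rw [← Finset.card_pos]
    have := Finset.le_card_sdiff Fv (L v)
    have := hL v
    omega
  obtain ⟨b, hbb⟩ := hbne
  rw [Finset.mem_sdiff] at hbb
  obtain ⟨hbL, hbF⟩ := hbb
  simp only [hFvdef, Finset.mem_insert, Finset.mem_singleton, not_or] at hbF
  obtain ⟨hba, hbx, hbw, hby⟩ := hbF
  -- the coloring
  set c : V → ℕ := fun z => if z = u then a else if z = v then b else c0 z with hcdef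
  have hcu : c u = a := if_pos rfl
  have hcv : c v = b := by
    simp [hcdef, Ne.symm huv']
  have hcz : ∀ z, z ≠ u → z ≠ v → c z = c0 z := by
    intro z h1 h2
    rw [hcdef]
    simp only [if_neg h1, if_neg h2]
  have hU : ∀ z, G.square.Adj u z → a ≠ c z := by
    intro z hadj
    rcases factU z hadj with h | h | h | ⟨hzx, hzu⟩
    · rw [h, hcv]; exact Ne.symm hba
    · rw [h, hcz x hxu' hxv]; exact hax
    · rw [h, hcz w (Ne.symm huw) (Ne.symm hvw')]; exact haw
    · have hzv : z ≠ v := by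
        rintro rfl
        rcases memNv x hzx.symm with h | h
        · exact hxu' h
        · exact hxw h
      rw [hcz z hzu hzv]
      exact haN z hzx hzu
  have hV : ∀ z, G.square.Adj v z → b ≠ c z := by
    intro z hadj
    rcases factV z hadj with h | h | h | h
    · rw [h, hcu]; exact hba
    · rw [h, hcz x hxu' hxv]; exact hbx
    · rw [h, hcz w (Ne.symm huw) (Ne.symm hvw')]; exact hbw
    · rw [h, hcz y (Ne.symm huy) (Ne.symm hvy)]; exact hby
  refine ⟨c, ?_, ?_⟩
  · intro z
    by_cases hzu : z = u
    · subst hzu; rw [hcu]; exact haL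
    by_cases hzv : z = v
    · subst hzv; rw [hcv]; exact hbL
    · rw [hcz z hzu hzv, hc0 z ⟨hzu, hzv⟩]
      exact hc'mem ⟨z, hzu, hzv⟩
  · intro z1 z2 hadj
    by_cases h1u : z1 = u
    · subst h1u; rw [hcu]; exact hU z2 hadj
    by_cases h1v : z1 = v
    · subst h1v; rw [hcv]; exact hV z2 hadj
    by_cases h2u : z2 = u
    · subst h2u; rw [hcu]; exact (hU z1 hadj.symm).symm
    by_cases h2v : z2 = v
    · subst h2v; rw [hcv]; exact (hV z1 hadj.symm).symm
    rw [hcz z1 h1u h1v, hcz z2 h2u h2v, hc0 z1 ⟨h1u, h1v⟩, hc0 z2 ⟨h2u, h2v⟩]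
    apply hc'prop
    obtain ⟨hne, hor | ⟨t, ht1, ht2⟩⟩ := hadj
    have hne' : (⟨z1, h1u, h1v⟩ : {z : V | z ≠ u ∧ z ≠ v}) ≠ ⟨z2, h2u, h2v⟩ :=
      fun h => hne (congrArg Subtype.val h)
    · exact ⟨hne', Or.inl hor⟩
    · have hne' : (⟨z1, h1u, h1v⟩ : {z : V | z ≠ u ∧ z ≠ v}) ≠ ⟨z2, h2u, h2v⟩ :=
        fun h => hne (congrArg Subtype.val h)
      by_cases htu : t = u
      · subst htu
        rcases memNu z1 ht1.symm with h | h
        · rcases memNu z2 ht2 with h' | h'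
          · exact absurd (h.trans h'.symm) hne
          · exact absurd h' h2v
        · exact absurd h h1v
      by_cases htv : t = v
      · subst htv
        rcases memNv z1 ht1.symm with h | h
        · exact absurd h h1u
        · rcases memNv z2 ht2 with h' | h'
          · exact absurd h' h2u
          · exact absurd (h.trans h'.symm) hne
      · exact ⟨hne', Or.inr ⟨⟨t, htu, htv⟩, ht1, ht2⟩⟩
end

section
/- Let k ≥ 5. Suppose G has maximum degree at most k and contains a cycle v₁v₂…v₃ℓ such that d(vᵢ) ≤ k−1 when 3 divides i and d(vᵢ) = 2 otherwise. If the square of the graph obtained from G by deleting all the degree-2 vertices of this cycle is (k+1)-choosable, then G² is (k+1)-choosable. -/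
open SimpleGraph

private def pickNe (S : Finset ℕ) (x : ℕ) : ℕ :=
  if h : (S.erase x).Nonempty then (S.erase x).min' h else 0

private lemma pickNe_spec {S : Finset ℕ} (x : ℕ) (hS : 2 ≤ S.card) :
    pickNe S x ∈ S ∧ pickNe S x ≠ x := by
  have h : (S.erase x).Nonempty := by
    rw [← Finset.card_pos]
    have := Finset.pred_card_le_card_erase (a := x) (s := S)
    omega
  rw [pickNe, dif_pos h]
  have := Finset.min'_mem _ h
  exact ⟨Finset.mem_of_mem_erase this, Finset.ne_of_mem_erase this⟩

/-- An even cycle is 2-choosable. -/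
private lemma cycleColor (n : ℕ) (hn : 2 ≤ n) (hev : Even n) (L : ℕ → Finset ℕ)
    (hL : ∀ i, i < n → 2 ≤ (L i).card) :
    ∃ f : ℕ → ℕ, (∀ i, i < n → f i ∈ L i) ∧
      (∀ i, i + 1 < n → f i ≠ f (i + 1)) ∧ f (n - 1) ≠ f 0 := by
  have h1n : 1 % n = 1 := Nat.mod_eq_of_lt (by omega)
  by_cases hA : ∃ i, i < n ∧ ∃ a ∈ L i, a ∉ L ((i + 1) % n)
  · obtain ⟨i, hi, a, ha, hna⟩ := hA
    set h : ℕ → ℕ := fun s => Nat.rec a (fun s ih => pickNe (L ((i + n - (s+1)) % n)) ih) s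
      with hh
    have hmodlt : ∀ x : ℕ, x % n < n := fun x => Nat.mod_lt _ (by omega)
    have hmem : ∀ s, s < n → h s ∈ L ((i + n - s) % n) := by
      intro s hs
      cases s with
      | zero =>
        have e : (i + n - 0) % n = i := by
          rw [Nat.sub_zero, Nat.add_mod_right, Nat.mod_eq_of_lt hi]
        rw [e]; exact ha
      | succ s => exact (pickNe_spec _ (hL _ (hmodlt _))).1
    have hne : ∀ s, h (s + 1) ≠ h s := by
      intro s
      exact (pickNe_spec _ (hL _ (hmodlt _))).2
    have hlast : a ≠ h (n - 1) := by
      intro hcontra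
      apply hna
      have hm := hmem (n-1) (by omega)
      have e : i + n - (n - 1) = i + 1 := by omega
      rw [e] at hm
      rwa [← hcontra] at hm
    refine ⟨fun j => h ((i + n - j) % n), ?_, ?_, ?_⟩
    · intro j hj
      show h ((i + n - j) % n) ∈ L j
      have key : (i + n - ((i + n - j) % n)) % n = j := by
        rcases le_or_gt j i with hji | hji
        · have e1 : (i + n - j) % n = i - j := by
            have h1 : i + n - j = (i - j) + n := by omega
            rw [h1, Nat.add_mod_right]; exact Nat.mod_eq_of_lt (by omega)
          rw [e1]
          have h2 : i + n - (i - j) = j + n := by omega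
          rw [h2, Nat.add_mod_right]; exact Nat.mod_eq_of_lt hj
        · have e1 : (i + n - j) % n = i + n - j := Nat.mod_eq_of_lt (by omega)
          rw [e1]
          have h2 : i + n - (i + n - j) = j := by omega
          rw [h2]; exact Nat.mod_eq_of_lt hj
      have := hmem _ (hmodlt (i + n - j))
      rwa [key] at this
    · intro j hj
      show h ((i + n - j) % n) ≠ h ((i + n - (j+1)) % n)
      have h1 : i + n - j = (i + n - (j+1)) + 1 := by omega
      rcases Nat.lt_or_ge ((i + n - (j+1)) % n) (n - 1) with hc | hc
      · have e : (i + n - j) % n = (i + n - (j+1)) % n + 1 := by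
          rw [h1, Nat.add_mod, h1n]
          exact Nat.mod_eq_of_lt (by omega)
        rw [e]
        exact hne _
      · have hc' : (i + n - (j+1)) % n = n - 1 :=
          le_antisymm (by have := hmodlt (i+n-(j+1)); omega) hc
        have h0 : (i + n - j) % n = 0 := by
          rw [h1, Nat.add_mod, hc', h1n]
          have e : n - 1 + 1 = n := by omega
          rw [e, Nat.mod_self]
        rw [h0, hc']
        exact hlast
    · show h ((i + n - (n-1)) % n) ≠ h ((i + n - 0) % n)
      have hs0 : (i + n - 0) % n = i := by
        rw [Nat.sub_zero, Nat.add_mod_right, Nat.mod_eq_of_lt hi]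
      rw [hs0]
      rcases Nat.lt_or_ge (i+1) n with hin | hin
      · have hs1 : (i + n - (n - 1)) % n = i + 1 := by
          have e : i + n - (n - 1) = i + 1 := by omega
          rw [e]; exact Nat.mod_eq_of_lt hin
        rw [hs1]
        exact hne i
      · have hie : i = n - 1 := by omega
        have hs1 : (i + n - (n - 1)) % n = 0 := by
          have e : i + n - (n - 1) = n := by omega
          rw [e, Nat.mod_self]
        rw [hs1, hie]
        exact hlast
  · push_neg at hA
    have hsub : ∀ i, i < n → L i ⊆ L ((i + 1) % n) := fun i hi x hx => hA i hi x hx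
    have hup : ∀ i, i < n → L 0 ⊆ L i := by
      intro i
      induction i with
      | zero => intro _; exact subset_rfl
      | succ i ih =>
        intro hi
        have h2 := hsub i (by omega)
        rw [Nat.mod_eq_of_lt hi] at h2
        exact (ih (by omega)).trans h2
    have hdown : ∀ d i, i + d = n - 1 → L i ⊆ L (n - 1) := by
      intro d
      induction d with
      | zero => intro i hi; rw [show i = n-1 by omega]
      | succ d ih =>
        intro i hi
        have h2 := hsub i (by omega)
        rw [Nat.mod_eq_of_lt (by omega)] at h2
        exact h2.trans (ih (i+1) (by omega))
    have hlo : L (n-1) ⊆ L 0 := by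
      have h2 := hsub (n-1) (by omega)
      rwa [show n-1+1 = n by omega, Nat.mod_self] at h2
    have heq : ∀ i, i < n → L i = L 0 := fun i hi =>
      subset_antisymm ((hdown (n-1-i) i (by omega)).trans hlo) (hup i hi)
    have hcard : 1 < (L 0).card := by have := hL 0 (by omega); omega
    obtain ⟨a, ha, b, hb, hab⟩ := Finset.one_lt_card.mp hcard
    have hodd : (n - 1) % 2 = 1 := by obtain ⟨m, hm⟩ := hev; omega
    refine ⟨fun j => if j % 2 = 0 then a else b, ?_, ?_, ?_⟩
    · intro i hi
      rw [heq i hi]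
      dsimp only
      split <;> assumption
    · intro i hi
      dsimp only
      rcases Nat.mod_two_eq_zero_or_one i with he | he
      · rw [if_pos (by omega : i % 2 = 0), if_neg (by omega : ¬ (i+1) % 2 = 0)]
        exact hab
      · rw [if_neg (by omega : ¬ i % 2 = 0), if_pos (by omega : (i+1) % 2 = 0)]
        exact hab.symm
    · dsimp only
      rw [if_neg (by omega : ¬ (n-1) % 2 = 0), if_pos (by omega : (0:ℕ) % 2 = 0)]
      exact hab.symm


set_option maxHeartbeats 1000000 in
/-- (C5): a `3ℓ`-cycle `v₁v₂…v₃ℓ` with `d(vᵢ) ≤ k-1` when `3 ∣ i` and `d(vᵢ) = 2`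
otherwise is `(k+1)`-reducible, for `k ≥ 5`. -/
theorem config_C5_reducible {V : Type*} [Fintype V] (k l : ℕ) (hk : 5 ≤ k) (hl : 1 ≤ l)
    (G : SimpleGraph V) (hΔ : ∀ z, (G.neighborSet z).ncard ≤ k)
    (v : ℕ → V) (hinj : Set.InjOn v (Set.Icc 1 (3 * l)))
    (hadj : ∀ j, 1 ≤ j → j < 3 * l → G.Adj (v j) (v (j + 1)))
    (hclose : G.Adj (v (3 * l)) (v 1))
    (hdegdvd : ∀ j, 1 ≤ j → j ≤ 3 * l → 3 ∣ j → (G.neighborSet (v j)).ncard ≤ k - 1)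
    (hdeg2 : ∀ j, 1 ≤ j → j ≤ 3 * l → ¬ 3 ∣ j → (G.neighborSet (v j)).ncard = 2)
    (hred : ((G.induce {x | ∀ j, 1 ≤ j → j ≤ 3 * l → ¬ 3 ∣ j → x ≠ v j}).square.Choosable
      (k + 1))) :
    G.square.Choosable (k + 1) := by
  classical
  intro L hL
  set S : Set V := {x | ∀ j, 1 ≤ j → j ≤ 3 * l → ¬ 3 ∣ j → x ≠ v j} with hSdef
  -- the normalized index function
  set fidx : ℕ → ℕ := fun j => (j + 3*l - 1) % (3*l) + 1 with hfidx
  have hf1 : ∀ j, 1 ≤ fidx j := fun j => by simp only [hfidx]; omega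
  have hf2 : ∀ j, fidx j ≤ 3*l := by
    intro j
    have := Nat.mod_lt (j + 3*l - 1) (y := 3*l) (by omega)
    simp only [hfidx]
    omega
  have hf3 : ∀ j, 1 ≤ j → j ≤ 3*l → fidx j = j := by
    intro j h1 h2
    simp only [hfidx]
    have e : j + 3*l - 1 = (j - 1) + 3*l := by omega
    rw [e, Nat.add_mod_right, Nat.mod_eq_of_lt (by omega)]
    omega
  have hf4 : ∀ j, fidx (j + 3*l) = fidx j := by
    intro j
    simp only [hfidx]
    have e : j + 3*l + 3*l - 1 = (j + 3*l - 1) + 3*l := by omega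
    rw [e, Nat.add_mod_right]
  have hf5 : ∀ j, fidx j % 3 = j % 3 := by
    intro j
    have h0 : (j + 3*l - 1) % (3*l) % 3 = (j + 3*l - 1) % 3 := Nat.mod_mod_of_dvd _ ⟨l, rfl⟩
    simp only [hfidx]
    omega
  set u : ℕ → V := fun j => v (fidx j) with hu
  have huv : ∀ j, 1 ≤ j → j ≤ 3*l → u j = v j := by
    intro j h1 h2; simp only [hu, hf3 j h1 h2]
  have hper : ∀ j, u (j + 3*l) = u j := by
    intro j; simp only [hu, hf4]
  have huEq : ∀ a b, u a = u b → fidx a = fidx b := by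
    intro a b hab
    exact hinj ⟨hf1 a, hf2 a⟩ ⟨hf1 b, hf2 b⟩ hab
  have hfeval : ∀ x, x ≤ 3*l → fidx x = if x = 0 then 3*l else x := by
    intro x hx
    by_cases h0 : x = 0
    · subst h0
      simp only [hfidx]
      rw [Nat.mod_eq_of_lt (by omega)]
      simp only [if_true]
      omega
    · rw [if_neg h0]; exact hf3 x (by omega) hx
  -- adjacency along the (periodic) cycle
  have hadj' : ∀ j, G.Adj (u j) (u (j+1)) := by
    intro j
    have hstep : fidx (j+1) = if fidx j = 3*l then 1 else fidx j + 1 := by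
      have h1n : 1 % (3*l) = 1 := Nat.mod_eq_of_lt (by omega)
      have e : j + 1 + 3*l - 1 = (j + 3*l - 1) + 1 := by omega
      have hr := Nat.mod_lt (j + 3*l - 1) (y := 3*l) (by omega)
      have hfj : fidx j = (j + 3*l - 1) % (3*l) + 1 := by simp only [hfidx]
      have e2 : fidx (j+1) = ((j + 3*l - 1) % (3*l) + 1) % (3*l) + 1 := by
        simp only [hfidx]
        rw [e, Nat.add_mod, h1n]
      rw [e2]
      split_ifs with hc
      · have e3 : (j + 3*l - 1) % (3*l) + 1 = 3*l := by omega
        rw [e3, Nat.mod_self]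
      · have hfj2 := hf2 j
        rw [Nat.mod_eq_of_lt (by omega)]
    by_cases hc : fidx j = 3*l
    · rw [hu]
      simp only [hstep, hc, if_pos]
      exact hclose
    · rw [hu]
      simp only [hstep, if_neg hc]
      exact hadj (fidx j) (hf1 j) (by have := hf2 j; omega)
  -- neighborhoods of degree-2 vertices
  have hNcard3 : ∀ j, 3 ∣ j → (G.neighborSet (u j)).ncard ≤ k - 1 := by
    intro j hj
    simp only [hu]
    exact hdegdvd (fidx j) (hf1 _) (hf2 _) (by have := hf5 j; omega)
  have hN2 : ∀ j, ¬ 3 ∣ (j+1) → G.neighborSet (u (j+1)) = {u j, u (j+2)} := by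
    intro j hj
    have hne2 : u j ≠ u (j+2) := by
      intro he
      have hq := huEq _ _ he
      have h5a := hf5 j
      have h5b := hf5 (j+2)
      omega
    have hsub : ({u j, u (j+2)} : Set V) ⊆ G.neighborSet (u (j+1)) := by
      intro x hx
      rcases hx with rfl | rfl
      · exact (hadj' j).symm
      · exact hadj' (j+1)
    have hcard : (G.neighborSet (u (j+1))).ncard = 2 := by
      have h5 := hf5 (j+1)
      simp only [hu]
      exact hdeg2 (fidx (j+1)) (hf1 _) (hf2 _) (by omega)
    have hpair : ({u j, u (j+2)} : Set V).ncard = 2 := Set.ncard_pair hne2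
    exact (Set.eq_of_subset_of_ncard_le hsub (by omega) (Set.toFinite _)).symm
  -- vertices not in S
  have hUS : ∀ j, ¬ 3 ∣ j → u j ∉ S := by
    intro j hj hmem
    have h5 := hf5 j
    exact hmem (fidx j) (hf1 j) (hf2 j) (by omega) (by rw [hu])
  -- conflict cycle positions
  set g2 : ℕ → ℕ := fun t => 3 * (t/2) + t % 2 + 1 with hg2
  set w : ℕ → V := fun t => u (g2 t) with hw
  have hg2b : ∀ t, t < 2*l → 1 ≤ g2 t ∧ g2 t ≤ 3*l - 1 ∧ g2 t % 3 = t % 2 + 1 := by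
    intro t ht; simp only [hg2]; omega
  have hgnd : ∀ t, ¬ 3 ∣ g2 t := by intro t; simp only [hg2]; omega
  have hwS : ∀ t, w t ∉ S := fun t => hUS _ (hgnd t)
  have hwinj : ∀ t t', t < 2*l → t' < 2*l → w t = w t' → t = t' := by
    intro t t' ht ht' he
    have h1 := hg2b t ht
    have h2 := hg2b t' ht'
    have h3 := huEq _ _ he
    rw [hf3 _ (by omega) (by omega), hf3 _ (by omega) (by omega)] at h3
    simp only [hg2] at h3
    omega
  have hcompl : ∀ x, x ∉ S → ∃ t, t < 2*l ∧ w t = x := by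
    intro x hx
    simp only [hSdef, Set.mem_setOf_eq] at hx
    push_neg at hx
    obtain ⟨j, hj1, hj2, hj3, hj4⟩ := hx
    refine ⟨2*(j/3) + (j % 3 - 1), by omega, ?_⟩
    have hgj : g2 (2*(j/3) + (j % 3 - 1)) = j := by simp only [hg2]; omega
    simp only [hw, hgj]
    rw [huv j hj1 hj2]
    exact hj4.symm
  -- the partial coloring on S
  obtain ⟨c₀, hc₀mem, hc₀prop⟩ := hred (fun x => L x.1) (fun x => hL x.1)
  set c₁ : V → ℕ := fun x => if h : x ∈ S then c₀ ⟨x, h⟩ else 0 with hc₁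
  have hc₁S : ∀ x (hx : x ∈ S), c₁ x = c₀ ⟨x, hx⟩ := by
    intro x hx; simp only [hc₁, dif_pos hx]
  -- already-colored square-neighbors of cycle vertices
  set Afin : ℕ → Finset V :=
    fun t => Finset.univ.filter (fun x => x ∈ S ∧ G.square.Adj (w t) x) with hAfin
  have hAmem : ∀ t x, x ∈ Afin t ↔ (x ∈ S ∧ G.square.Adj (w t) x) := by
    intro t x; simp [hAfin]
  have hcardgen : ∀ (H : ℕ) (a1 a2 r1 r2 : V) (T : Finset V),
      3 ∣ H → r1 ∈ G.neighborSet (u H) → r2 ∈ G.neighborSet (u H) → r1 ≠ r2 →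
      T ⊆ {a1, a2} ∪ ((G.neighborSet (u H)).toFinset \ {r1, r2}) →
      T.card ≤ k - 1 := by
    intro H a1 a2 r1 r2 T hH hr1 hr2 hrne hsub
    have hNc : (G.neighborSet (u H)).toFinset.card ≤ k - 1 := by
      rw [← Set.ncard_eq_toFinset_card']
      exact hNcard3 H hH
    have hrsub : ({r1, r2} : Finset V) ⊆ (G.neighborSet (u H)).toFinset := by
      intro x hx
      simp only [Finset.mem_insert, Finset.mem_singleton] at hx
      rcases hx with rfl | rfl
      · exact Set.mem_toFinset.2 hr1
      · exact Set.mem_toFinset.2 hr2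
    have h0 := Finset.card_le_card hsub
    have h1 := Finset.card_union_le ({a1, a2} : Finset V)
      ((G.neighborSet (u H)).toFinset \ {r1, r2})
    have h2 : ({a1, a2} : Finset V).card ≤ 2 := (Finset.card_insert_le _ _).trans (by simp)
    have h3 := Finset.card_sdiff_of_subset hrsub
    have h4 : ({r1, r2} : Finset V).card = 2 := by
      rw [Finset.card_insert_of_notMem (by simpa using hrne), Finset.card_singleton]
    omega
  have hAcard : ∀ t, t < 2*l → (Afin t).card ≤ k - 1 := by
    intro t ht
    have hgt := hg2b t ht
    rcases Nat.mod_two_eq_zero_or_one t with hpar | hpar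
    · -- t even, g2 t = 3*(t/2)+1
      have hA : g2 t = 3*(t/2) + 1 := by simp only [hg2]; omega
      set i := t/2 with hi
      have hwt : w t = u (3*i+1) := by rw [hw]; simp only [hA]
      have hNwt : G.neighborSet (u (3*i+1)) = {u (3*i), u (3*i+2)} :=
        hN2 (3*i) (by omega)
      have hNwt2 : G.neighborSet (u (3*i+2)) = {u (3*i+1), u (3*i+3)} :=
        hN2 (3*i+1) (by omega)
      have hr2 : u (3*i+3*l-1) ∈ G.neighborSet (u (3*i)) := by
        have h := hadj' (3*i+3*l-1)
        rw [show 3*i+3*l-1+1 = 3*i + 3*l by omega, hper] at h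
        exact h.symm
      apply hcardgen (3*i) (u (3*i)) (u (3*i+3)) (u (3*i+1)) (u (3*i+3*l-1)) _
        ⟨i, rfl⟩ (hadj' (3*i)) hr2
      · intro he
        have hq := huEq _ _ he
        have h5a := hf5 (3*i+1)
        have h5b := hf5 (3*i+3*l-1)
        omega
      · intro x hx
        rw [hAmem] at hx
        obtain ⟨hxS, hne, hor⟩ := hx
        rw [hwt] at hor hne
        have hnotr : x ∉ ({u (3*i+1), u (3*i+3*l-1)} : Finset V) := by
          simp only [Finset.mem_insert, Finset.mem_singleton]
          push_neg
          constructor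
          · intro he; rw [he] at hxS; exact hUS _ (by omega) hxS
          · intro he; rw [he] at hxS; exact hUS _ (by omega) hxS
        rcases hor with hadjx | ⟨z, hz1, hz2⟩
        · have hm : x ∈ G.neighborSet (u (3*i+1)) := hadjx
          rw [hNwt] at hm
          rcases hm with rfl | rfl
          · exact Finset.mem_union_left _ (by simp)
          · exact absurd hxS (hUS _ (by omega))
        · have hm : z ∈ G.neighborSet (u (3*i+1)) := hz1
          rw [hNwt] at hm
          rcases hm with rfl | rfl
          · refine Finset.mem_union_right _ (Finset.mem_sdiff.2 ⟨Set.mem_toFinset.2 hz2, hnotr⟩)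
          · have hm2 : x ∈ G.neighborSet (u (3*i+2)) := hz2
            rw [hNwt2] at hm2
            rcases hm2 with rfl | rfl
            · exact absurd hxS (hUS _ (by omega))
            · exact Finset.mem_union_left _ (by simp)
    · -- t odd, g2 t = 3*(t/2)+2
      have hA : g2 t = 3*(t/2) + 2 := by simp only [hg2]; omega
      set i := t/2 with hi
      have hil : i ≤ l - 1 := by omega
      have hwt : w t = u (3*i+2) := by rw [hw]; simp only [hA]
      have hNwt : G.neighborSet (u (3*i+2)) = {u (3*i+1), u (3*i+3)} :=
        hN2 (3*i+1) (by omega)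
      have hNwt2 : G.neighborSet (u (3*i+1)) = {u (3*i), u (3*i+2)} :=
        hN2 (3*i) (by omega)
      apply hcardgen (3*i+3) (u (3*i)) (u (3*i+3)) (u (3*i+2)) (u (3*i+4)) _
        ⟨i+1, by omega⟩ ((hadj' (3*i+2)).symm) (hadj' (3*i+3))
      · intro he
        have hq := huEq _ _ he
        have h5a := hf5 (3*i+2)
        have h5b := hf5 (3*i+4)
        omega
      · intro x hx
        rw [hAmem] at hx
        obtain ⟨hxS, hne, hor⟩ := hx
        rw [hwt] at hor hne
        have hnotr : x ∉ ({u (3*i+2), u (3*i+4)} : Finset V) := by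
          simp only [Finset.mem_insert, Finset.mem_singleton]
          push_neg
          constructor
          · intro he; rw [he] at hxS; exact hUS _ (by omega) hxS
          · intro he; rw [he] at hxS; exact hUS _ (by omega) hxS
        rcases hor with hadjx | ⟨z, hz1, hz2⟩
        · have hm : x ∈ G.neighborSet (u (3*i+2)) := hadjx
          rw [hNwt] at hm
          rcases hm with rfl | rfl
          · exact absurd hxS (hUS _ (by omega))
          · exact Finset.mem_union_left _ (by simp)
        · have hm : z ∈ G.neighborSet (u (3*i+2)) := hz1
          rw [hNwt] at hm
          rcases hm with rfl | rfl
          · have hm2 : x ∈ G.neighborSet (u (3*i+1)) := hz2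
            rw [hNwt2] at hm2
            rcases hm2 with rfl | rfl
            · exact Finset.mem_union_left _ (by simp)
            · exact absurd hxS (hUS _ (by omega))
          · exact Finset.mem_union_right _ (Finset.mem_sdiff.2 ⟨Set.mem_toFinset.2 hz2, hnotr⟩)
  -- residual lists on the cycle
  set LL : ℕ → Finset ℕ := fun t => L (w t) \ (Afin t).image c₁ with hLL
  have hLLcard : ∀ t, t < 2*l → 2 ≤ (LL t).card := by
    intro t ht
    have h1 : ((Afin t).image c₁).card ≤ k - 1 :=
      le_trans Finset.card_image_le (hAcard t ht)
    have h2 := Finset.card_sdiff_add_card (L (w t)) ((Afin t).image c₁)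
    have h3 : (L (w t)).card ≤ ((L (w t)) ∪ (Afin t).image c₁).card :=
      Finset.card_le_card Finset.subset_union_left
    have h4 := hL (w t)
    simp only [hLL]
    omega
  obtain ⟨f, hfmem, hfstep, hfwrap⟩ := cycleColor (2*l) (by omega) ⟨l, by omega⟩ LL hLLcard
  -- the final coloring
  set c : V → ℕ := fun x => if h : ∃ t, t < 2*l ∧ w t = x then f (Classical.choose h) else c₁ x
    with hc
  have hcw : ∀ t, t < 2*l → c (w t) = f t := by
    intro t ht
    have hex : ∃ t', t' < 2*l ∧ w t' = w t := ⟨t, ht, rfl⟩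
    simp only [hc, dif_pos hex]
    have hspec := Classical.choose_spec hex
    rw [hwinj _ _ hspec.1 ht hspec.2]
  have hcS : ∀ x, x ∈ S → c x = c₁ x := by
    intro x hx
    have hne : ¬ ∃ t, t < 2*l ∧ w t = x := by
      rintro ⟨t, ht, rfl⟩; exact hwS t hx
    simp only [hc, dif_neg hne]
  refine ⟨c, ?_, ?_⟩
  · intro x
    by_cases hx : x ∈ S
    · rw [hcS x hx, hc₁S x hx]
      exact hc₀mem ⟨x, hx⟩
    · obtain ⟨t, ht, rfl⟩ := hcompl x hx
      rw [hcw t ht]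
      have hm := hfmem t ht
      simp only [hLL, Finset.mem_sdiff] at hm
      exact hm.1
  · intro x y hxy
    by_cases hx : x ∈ S <;> by_cases hy : y ∈ S
    · -- both in S : use the coloring of the reduced graph
      rw [hcS x hx, hcS y hy, hc₁S x hx, hc₁S y hy]
      apply hc₀prop
      obtain ⟨hne, hor⟩ := hxy
      refine ⟨by simpa [Subtype.ext_iff] using hne, ?_⟩
      rcases hor with h | ⟨z, hz1, hz2⟩
      · exact Or.inl h
      · by_cases hzS : z ∈ S
        · exact Or.inr ⟨⟨z, hzS⟩, hz1, hz2⟩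
        · exfalso
          obtain ⟨t, ht, rfl⟩ := hcompl z hzS
          have hgt := hg2b t ht
          have hNa : G.neighborSet (u (g2 t)) = {u (g2 t - 1), u (g2 t + 1)} := by
            have h := hN2 (g2 t - 1) (by rw [show g2 t - 1 + 1 = g2 t by omega]; exact hgnd t)
            rw [show g2 t - 1 + 1 = g2 t by omega, show g2 t - 1 + 2 = g2 t + 1 by omega] at h
            exact h
          simp only [hw] at hz1 hz2
          have hmx : x ∈ G.neighborSet (u (g2 t)) := hz1.symm
          have hmy : y ∈ G.neighborSet (u (g2 t)) := hz2
          rw [hNa] at hmx hmy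
          have hg3 := hgnd t
          rcases hmx with rfl | rfl <;> rcases hmy with rfl | rfl
          · exact hne rfl
          · rcases Nat.lt_or_ge ((g2 t) % 3) 2 with hm3 | hm3
            · exact hUS _ (by omega) hy
            · exact hUS _ (by omega) hx
          · rcases Nat.lt_or_ge ((g2 t) % 3) 2 with hm3 | hm3
            · exact hUS _ (by omega) hx
            · exact hUS _ (by omega) hy
          · exact hne rfl
    · -- x ∈ S, y on the cycle
      obtain ⟨t, ht, rfl⟩ := hcompl y hy
      rw [hcS x hx, hcw t ht]
      have hmem : x ∈ Afin t := (hAmem t x).2 ⟨hx, hxy.symm⟩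
      have hfm := hfmem t ht
      simp only [hLL, Finset.mem_sdiff] at hfm
      intro he
      exact hfm.2 (Finset.mem_image.2 ⟨x, hmem, he⟩)
    · -- y ∈ S, x on the cycle
      obtain ⟨t, ht, rfl⟩ := hcompl x hx
      rw [hcS y hy, hcw t ht]
      have hmem : y ∈ Afin t := (hAmem t y).2 ⟨hy, hxy⟩
      have hfm := hfmem t ht
      simp only [hLL, Finset.mem_sdiff] at hfm
      intro he
      exact hfm.2 (Finset.mem_image.2 ⟨y, hmem, he.symm⟩)
    · -- both on the cycle
      obtain ⟨t, ht, rfl⟩ := hcompl x hx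
      obtain ⟨t', ht', rfl⟩ := hcompl y hy
      have htt' : t ≠ t' := fun he => hxy.1 (by rw [he])
      rw [hcw t ht, hcw t' ht']
      obtain ⟨i, r, hr2, rfl⟩ : ∃ i r, r < 2 ∧ t = 2*i + r := ⟨t/2, t%2, by omega, by omega⟩
      obtain ⟨i', r', hr2', rfl⟩ : ∃ i r, r < 2 ∧ t' = 2*i + r := ⟨t'/2, t'%2, by omega, by omega⟩
      have hta : g2 (2*i+r) = 3*i+r+1 := by simp only [hg2]; omega
      have htb : g2 (2*i'+r') = 3*i'+r'+1 := by simp only [hg2]; omega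
      have hkey : ∀ p q : ℕ, p ≤ 3*l → q ≤ 3*l → u p = u q →
          p = q ∨ (p = 0 ∧ q = 3*l) ∨ (q = 0 ∧ p = 3*l) ∨ (p = 0 ∧ q = 0) := by
        intro p q hp hq he
        have h := huEq _ _ he
        rcases Nat.eq_zero_or_pos p with rfl | hp1 <;> rcases Nat.eq_zero_or_pos q with rfl | hq1
        · tauto
        · rw [hfeval 0 (by omega), hfeval q hq, if_pos rfl, if_neg (by omega)] at h
          omega
        · rw [hfeval p hp, hfeval 0 (by omega), if_neg (by omega), if_pos rfl] at h
          omega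
        · rw [hfeval p hp, hfeval q hq, if_neg (by omega), if_neg (by omega)] at h
          omega
      have hNa : G.neighborSet (u (3*i+r+1)) = {u (3*i+r), u (3*i+r+2)} :=
        hN2 (3*i+r) (by omega)
      have hNb : G.neighborSet (u (3*i'+r'+1)) = {u (3*i'+r'), u (3*i'+r'+2)} :=
        hN2 (3*i'+r') (by omega)
      have hil : i < l ∧ i' < l := by omega
      have hclaim : (2*i'+r' = 2*i+r + 1 ∧ 2*i+r + 1 < 2*l)
          ∨ (2*i+r = 2*i'+r' + 1 ∧ 2*i'+r' + 1 < 2*l)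
          ∨ (2*i+r = 2*l - 1 ∧ 2*i'+r' = 0) ∨ (2*i'+r' = 2*l - 1 ∧ 2*i+r = 0) := by
        obtain ⟨hne, hor⟩ := hxy
        simp only [hw, hta, htb] at hor
        rcases hor with hG | ⟨z, hz1, hz2⟩
        · have hm : u (3*i'+r'+1) ∈ G.neighborSet (u (3*i+r+1)) := hG
          rw [hNa] at hm
          rcases hm with he | he
          · have := hkey _ _ (by omega) (by omega) he
            omega
          · have := hkey _ _ (by omega) (by omega) he
            omega
        · have hmz : z ∈ G.neighborSet (u (3*i+r+1)) := hz1
          rw [hNa] at hmz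
          rcases hmz with rfl | rfl
          · -- z = u (3*i+r)
            rcases Nat.eq_zero_or_pos r with rfl | hr1
            · -- r = 0 : z = u (3*i) is a hub
              have hm : u (3*i) ∈ G.neighborSet (u (3*i'+r'+1)) := hz2.symm
              rw [hNb] at hm
              rcases hm with he | he
              · have := hkey _ _ (by omega) (by omega) he
                omega
              · have := hkey _ _ (by omega) (by omega) he
                omega
            · -- r = 1 : z = u (3*i+1) is a degree-2 vertex
              have hr1' : r = 1 := by omega
              subst hr1'
              have hNz : G.neighborSet (u (3*i+1)) = {u (3*i), u (3*i+2)} :=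
                hN2 (3*i) (by omega)
              have hm : u (3*i'+r'+1) ∈ G.neighborSet (u (3*i+1)) := hz2
              rw [hNz] at hm
              rcases hm with he | he
              · have := hkey _ _ (by omega) (by omega) he
                omega
              · have := hkey _ _ (by omega) (by omega) he
                omega
          · -- z = u (3*i+r+2)
            rcases Nat.eq_zero_or_pos r with rfl | hr1
            · -- r = 0 : z = u (3*i+2) is a degree-2 vertex
              have hNz : G.neighborSet (u (3*i+2)) = {u (3*i+1), u (3*i+3)} :=
                hN2 (3*i+1) (by omega)
              have hm : u (3*i'+r'+1) ∈ G.neighborSet (u (3*i+2)) := hz2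
              rw [hNz] at hm
              rcases hm with he | he
              · have := hkey _ _ (by omega) (by omega) he
                omega
              · have := hkey _ _ (by omega) (by omega) he
                omega
            · -- r = 1 : z = u (3*i+3) is a hub
              have hr1' : r = 1 := by omega
              subst hr1'
              have hm : u (3*i+3) ∈ G.neighborSet (u (3*i'+r'+1)) := hz2.symm
              rw [hNb] at hm
              rcases hm with he | he
              · have := hkey _ _ (by omega) (by omega) he
                omega
              · have := hkey _ _ (by omega) (by omega) he
                omega
      rcases hclaim with ⟨h1, h2⟩ | ⟨h1, h2⟩ | ⟨h1, h2⟩ | ⟨h1, h2⟩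
      · rw [h1]; exact hfstep _ (by omega)
      · rw [h1]; exact (hfstep _ (by omega)).symm
      · rw [h1, h2]; exact hfwrap
      · rw [h1, h2]; exact hfwrap.symm
end
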